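/- Let G be a finite group, k ≥ 1 an integer, and fix signs t_0,…,t_{k−1} ∈ {+,−}. On H = (ℂ^G)^{⊗k} let T_i^g denote the operator acting as T^g_{t_i} on the i-th tensor factor and as the identity elsewhere. For each i define the elementary (triangle) ribbon-operators F_i^{(h,g)} = T_i^{g⁻¹} (independent of h), and define operators G_j^{κ} (κ ∈ G×G, 1 ≤ j ≤ k) recursively by G_1^{κ} = F_0^{κ} and G_{j+1}^{κ} = ∑_{m,n ∈ G×G} Ω^{κ}_{mn} G_j^{m} F_j^{n}. Then for every 1 ≤ j ≤ k and every (h,g) ∈ G×G, G_j^{(h,g)} = ∑ T_0^{a_0} T_1^{a_1} ⋯ T_{j−1}^{a_{j−1}}, the sum over all tuples (a_0,…,a_{j−1}) ∈ G^j with a_{j−1} ⋯ a_1 a_0 = g⁻¹; in particular G_j^{(h,g)} does not depend on h. -/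

import Mathlib

open Matrix Kronecker BigOperators

noncomputable section

variable {G : Type*} [Group G] [Fintype G] [DecidableEq G]

/-- `L^g_+ : |z⟩ ↦ |gz⟩` (left multiplication by `g`). -/
def Lp (g : G) : Matrix G G ℂ := Matrix.of fun x z => if x = g * z then 1 else 0

/-- `L^g_- : |z⟩ ↦ |z g⁻¹⟩` (right multiplication by `g⁻¹`). -/
def Lm (g : G) : Matrix G G ℂ := Matrix.of fun x z => if x = z * g⁻¹ then 1 else 0

/-- `T^g_+ = |g⟩⟨g|`. -/
def Tp (g : G) : Matrix G G ℂ := Matrix.of fun x z => if x = g ∧ z = g then 1 else 0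

/-- `T^g_- = |g⁻¹⟩⟨g⁻¹|`. -/
def Tm (g : G) : Matrix G G ℂ := Tp g⁻¹

/-- Signed `L` operator: `true` stands for `+`, `false` for `−`. -/
def Lsgn (s : Bool) (g : G) : Matrix G G ℂ := if s then Lp g else Lm g

/-- Signed `T` operator: `true` stands for `+`, `false` for `−`. -/
def Tsgn (s : Bool) (g : G) : Matrix G G ℂ := if s then Tp g else Tm g

/-- The operator acting as `A` on the `i`-th tensor factor of `(ℂ^G)^{⊗k}`
and as the identity on all other factors. -/
def factor {k : ℕ} (i : Fin k) (A : Matrix G G ℂ) : Matrix (Fin k → G) (Fin k → G) ℂ :=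
  Matrix.of fun x y => if ∀ j, j ≠ i → x j = y j then A (x i) (y i) else 0

/-- The partial matrix element `(1_H ⊗ ⟨ψ|) Z (1_H ⊗ |ψ⟩)` of an operator `Z` on `H ⊗ ℂ^R`. -/
def pme {H R : Type*} [Fintype R] (ψ : R → ℂ) (Z : Matrix (H × R) (H × R) ℂ) :
    Matrix H H ℂ :=
  Matrix.of fun x y => ∑ a : R, ∑ b : R, (starRingEnd ℂ) (ψ a) * Z (x, a) (y, b) * ψ b

/-- The structure constants `Ω^k_{mn}` of the quantum double. -/
def Om (k m n : G × G) : ℂ :=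
  if k.2 = m.2 * n.2 ∧ m.1 = k.1 ∧ n.1 = m.2⁻¹ * k.1 * m.2 then 1 else 0

/-- For the elementary (triangle) ribbon-operators `Fᵢ^{(h,g)} = Tᵢ^{g⁻¹}`,
the operators defined recursively by `G₁ = F₀` and `G_{j+1}^κ = ∑_{m,n} Ω^κ_{mn} G_j^m F_j^n`
satisfy `G_j^{(h,g)} = ∑_{a_{j-1}⋯a₁a₀ = g⁻¹} T₀^{a₀} ⋯ T_{j-1}^{a_{j-1}}` for all `1 ≤ j ≤ k`;
in particular they do not depend on `h`. -/
lemma prod_map_snoc {M : Type*} [Monoid M] (j : ℕ) (f : Fin (j+1) → M) :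
    ((List.finRange (j+1)).map f).prod
      = ((List.finRange j).map (fun i => f i.castSucc)).prod * f (Fin.last j) := by
  rw [← List.ofFn_eq_map, List.ofFn_succ', List.prod_concat, List.ofFn_eq_map]

lemma revprod_snoc {M : Type*} [Monoid M] (j : ℕ) (f : Fin (j+1) → M) :
    (((List.finRange (j+1)).reverse).map f).prod
      = f (Fin.last j) * (((List.finRange j).reverse).map (fun i => f i.castSucc)).prod := by
  rw [List.map_reverse, ← List.ofFn_eq_map, List.ofFn_succ', List.concat_eq_append,
    List.reverse_append, List.reverse_singleton, List.singleton_append,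
    List.prod_cons, List.ofFn_eq_map, List.map_reverse]

lemma Om_eq (κ m n : G × G) :
    Om κ m n = if n = (m.2⁻¹ * κ.1 * m.2, m.2⁻¹ * κ.2) ∧ m.1 = κ.1 then 1 else 0 := by
  unfold Om
  refine if_congr ?_ rfl rfl
  rw [Prod.ext_iff]
  constructor
  · rintro ⟨h1, h2, h3⟩
    exact ⟨⟨h3, by rw [h1]; group⟩, h2⟩
  · rintro ⟨⟨h1, h2⟩, h3⟩
    exact ⟨by rw [h2]; group, h3, h1⟩

theorem statement9 (k : ℕ) (hk : 1 ≤ k) (t : Fin k → Bool)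
    (F : Fin k → (G × G) → Matrix (Fin k → G) (Fin k → G) ℂ)
    (hF : ∀ i (κ : G × G), F i κ = factor i (Tsgn (t i) κ.2⁻¹))
    (Gop : ℕ → (G × G) → Matrix (Fin k → G) (Fin k → G) ℂ)
    (hG1 : ∀ κ, Gop 1 κ = F ⟨0, hk⟩ κ)
    (hGrec : ∀ j, 1 ≤ j → ∀ hj : j < k, ∀ κ,
      Gop (j + 1) κ = ∑ m : G × G, ∑ n : G × G, Om κ m n • (Gop j m * F ⟨j, hj⟩ n)) :
    ∀ j, 1 ≤ j → ∀ hjk : j ≤ k, ∀ h g : G,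
      Gop j (h, g) =
        ∑ a ∈ Finset.univ.filter
            (fun a : Fin j → G => (((List.finRange j).reverse).map a).prod = g⁻¹),
          ((List.finRange j).map
            (fun i => factor (Fin.castLE hjk i) (Tsgn (t (Fin.castLE hjk i)) (a i)))).prod := by
  intro j
  induction j with
  | zero => intro h1; exact absurd h1 (by norm_num)
  | succ j ih =>
    intro _ hjk h g
    rcases Nat.eq_zero_or_pos j with rfl | hj1
    · -- base case j = 0, so j + 1 = 1
      rw [hG1, hF]
      have hset : Finset.univ.filter
          (fun a : Fin 1 → G => (((List.finRange 1).reverse).map a).prod = g⁻¹)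
          = {fun _ => g⁻¹} := by
        ext a
        simp only [Finset.mem_filter, Finset.mem_univ, true_and, Finset.mem_singleton]
        constructor
        · intro ha
          funext i
          fin_cases i
          simpa [List.finRange_succ] using ha
        · rintro rfl
          simp [List.finRange_succ]
      rw [hset, Finset.sum_singleton]
      simp [List.finRange_succ]
      rfl
    · -- inductive step
      have hj : j < k := hjk
      have hjk' : j ≤ k := le_of_lt hj
      -- abbreviation for the reverse product
      set rp : (Fin j → G) → G :=
        fun a => (((List.finRange j).reverse).map a).prod with hrp
      have step1 : Gop (j+1) (h, g)
          = ∑ m2 : G, Gop j (h, m2) * F ⟨j, hj⟩ (m2⁻¹ * h * m2, m2⁻¹ * g) := by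
        rw [hGrec j hj1 hj]
        simp only [Om_eq, ite_smul, one_smul, zero_smul, ite_and]
        simp only [Finset.sum_ite_eq', Finset.mem_univ, if_true]
        rw [Fintype.sum_prod_type, Finset.sum_comm]
        simp only [Finset.sum_ite_eq', Finset.mem_univ, if_true]
      rw [step1]
      have hLHS : (∑ m2 : G, Gop j (h, m2) * F ⟨j, hj⟩ (m2⁻¹ * h * m2, m2⁻¹ * g))
          = ∑ a : Fin j → G,
              ((List.finRange j).map
                (fun i => factor (Fin.castLE hjk' i) (Tsgn (t (Fin.castLE hjk' i)) (a i)))).prod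
              * factor ⟨j, hj⟩ (Tsgn (t ⟨j, hj⟩) (g⁻¹ * (rp a)⁻¹)) := by
        have := fun m2 : G => ih hj1 hjk' h m2
        calc ∑ m2 : G, Gop j (h, m2) * F ⟨j, hj⟩ (m2⁻¹ * h * m2, m2⁻¹ * g)
            = ∑ m2 : G, ∑ a : Fin j → G,
                if rp a = m2⁻¹ then
                  ((List.finRange j).map
                    (fun i => factor (Fin.castLE hjk' i)
                      (Tsgn (t (Fin.castLE hjk' i)) (a i)))).prod
                  * factor ⟨j, hj⟩ (Tsgn (t ⟨j, hj⟩) (g⁻¹ * m2)) else 0 := by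
              refine Finset.sum_congr rfl fun m2 _ => ?_
              rw [ih hj1 hjk' h m2, hF, Finset.sum_filter, Finset.sum_mul]
              refine Finset.sum_congr rfl fun a _ => ?_
              rw [ite_mul, zero_mul]
              rw [show ((m2⁻¹ * h * m2, m2⁻¹ * g) : G × G).2⁻¹ = g⁻¹ * m2 by
                simp [_root_.mul_inv_rev]]
          _ = _ := by
              rw [Finset.sum_comm]
              refine Finset.sum_congr rfl fun a _ => ?_
              have : ∀ m2 : G, (rp a = m2⁻¹) ↔ (m2 = (rp a)⁻¹) := by
                intro m2; constructor
                · intro hh; rw [hh, inv_inv]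
                · intro hh; rw [hh, inv_inv]
              simp only [this, Finset.sum_ite_eq', Finset.mem_univ, if_true]
      rw [hLHS]
      -- now the RHS
      rw [Finset.sum_filter]
      have e := (Fin.snocEquiv (fun _ : Fin (j+1) => G))
      rw [← Fintype.sum_equiv (Fin.snocEquiv (fun _ : Fin (j+1) => G))
        (fun p => if (((List.finRange (j+1)).reverse).map
              ((Fin.snocEquiv (fun _ : Fin (j+1) => G)) p)).prod = g⁻¹ then
            ((List.finRange (j+1)).map
              (fun i => factor (Fin.castLE hjk i)
                (Tsgn (t (Fin.castLE hjk i)) ((Fin.snocEquiv (fun _ : Fin (j+1) => G)) p i)))).prod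
          else 0)
        _ (fun p => rfl)]
      rw [Fintype.sum_prod_type, Finset.sum_comm]
      refine (Finset.sum_congr rfl fun a _ => ?_).symm
      have hsnoc : ∀ x : G,
          (Fin.snocEquiv (fun _ : Fin (j+1) => G)) (x, a) = Fin.snoc a x := by
        intro x; funext i; rfl
      simp only [hsnoc]
      have hrev : ∀ x : G,
          (((List.finRange (j+1)).reverse).map (Fin.snoc a x)).prod = x * rp a := by
        intro x
        rw [revprod_snoc j (Fin.snoc a x)]
        simp only [Fin.snoc_last, Fin.snoc_castSucc]
        rfl
      have hprodeq : ∀ x : G,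
          ((List.finRange (j+1)).map
            (fun i => factor (Fin.castLE hjk i)
              (Tsgn (t (Fin.castLE hjk i)) (Fin.snoc a x i)))).prod
          = ((List.finRange j).map
              (fun i => factor (Fin.castLE hjk' i)
                (Tsgn (t (Fin.castLE hjk' i)) (a i)))).prod
            * factor ⟨j, hj⟩ (Tsgn (t ⟨j, hj⟩) x) := by
        intro x
        rw [prod_map_snoc j]
        congr 1
        · refine congrArg List.prod (List.map_congr_left fun i _ => ?_)
          have h1 : Fin.castLE hjk i.castSucc = Fin.castLE hjk' i := rfl
          rw [h1, Fin.snoc_castSucc]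
        · have h2 : Fin.castLE hjk (Fin.last j) = (⟨j, hj⟩ : Fin k) := rfl
          rw [h2, Fin.snoc_last]
      simp only [hrev, hprodeq]
      have hcond : ∀ x : G, (x * rp a = g⁻¹) ↔ (x = g⁻¹ * (rp a)⁻¹) := by
        intro x; constructor
        · intro hh; rw [← hh]; group
        · intro hh; rw [hh]; group
      simp only [hcond, Finset.sum_ite_eq', Finset.mem_univ, if_true]
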